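/- Let D be a causal differentiator, let L, N, R, τ ≥ 0, and suppose D is exact in finite time over F_L, i.e., for every R' ≥ 0 there exists a time t_{R'} ≥ 0 such that [D f](t) = ḟ(t) for every f ∈ F_L^{R'} and every t ≥ t_{R'}. Then there exist f ∈ F_L^R, a noise η ∈ E_N, and a time t ≥ τ such that |ḟ(t) − [D(f + η)](t)| ≥ 2·√(2·N·L). In particular, the worst-case differentiation error of D from time τ over F_L^R with noise bound N is at least 2·√(2·N·L). -/

import Mathlib

open Set Filter Topology

/-- `f ∈ F_L`: `f : [0,∞) → ℝ` is differentiable with derivative `f'`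
that is Lipschitz continuous with constant `L` on `[0,∞)`. -/
def IsFL (L : ℝ) (f f' : ℝ → ℝ) : Prop :=
  (∀ t ∈ Set.Ici (0:ℝ), HasDerivWithinAt f (f' t) (Set.Ici 0) t) ∧
  ∀ s ∈ Set.Ici (0:ℝ), ∀ t ∈ Set.Ici (0:ℝ), |f' s - f' t| ≤ L * |s - t|

/-- `η ∈ E_N`: measurable noise bounded by `N` on `[0,∞)`. -/
def IsEN (N : ℝ) (η : ℝ → ℝ) : Prop :=
  Measurable η ∧ ∀ t ∈ Set.Ici (0:ℝ), |η t| ≤ N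

/-- `f ∈ F_L^R`: member of `F_L` with `|f(0)| ≤ R` and `|ḟ(0)| ≤ R`. -/
def IsFLR (L R : ℝ) (f f' : ℝ → ℝ) : Prop :=
  IsFL L f f' ∧ |f 0| ≤ R ∧ |f' 0| ≤ R

/-- A differentiator is causal if its output at time `T` depends only on the
input on `[0, T]`. -/
def Causal (D : (ℝ → ℝ) → ℝ → ℝ) : Prop :=
  ∀ u₁ u₂ T, (∀ t ∈ Set.Icc (0:ℝ) T, u₁ t = u₂ t) → D u₁ T = D u₂ T

/-! Auxiliary construction: a "spike" function `Hd` with second derivative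
bounded by `2L`, amplitude bounded by `N` on `(-∞, 2a]`, vanishing on
`(-∞,0]`, and whose derivative `Gd` reaches `2La` at `2a`. -/

/-- Derivative of the spike, written via `max`/`min` so Lipschitz bounds are easy. -/
noncomputable def Gd (L a : ℝ) (s : ℝ) : ℝ :=
  2 * L * max (min (s - a) a) (-(min (max s 0) (a / 2)))

/-- The spike function itself. -/
noncomputable def Hd (L N a : ℝ) (s : ℝ) : ℝ :=
  if s ≤ 0 then 0
  else if s ≤ a / 2 then -(L * s ^ 2)
  else if s ≤ 2 * a then L * (s - a) ^ 2 - N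
  else 2 * L * a * (s - 2 * a) + N

lemma Gd_eq0 {L a : ℝ} (ha : 0 < a) {s : ℝ} (hs : s ≤ 0) : Gd L a s = 0 := by
  unfold Gd
  have h1 : max s 0 = 0 := max_eq_right hs
  have h2 : min (0:ℝ) (a/2) = 0 := min_eq_left (by linarith)
  have h3 : min (s - a) a ≤ 0 := le_trans (min_le_left _ _) (by linarith)
  rw [h1, h2, neg_zero, max_eq_right h3, mul_zero]

lemma Gd_eq1 {L a : ℝ} (ha : 0 < a) {s : ℝ} (hs0 : 0 ≤ s) (hs1 : s ≤ a / 2) :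
    Gd L a s = -(2 * L * s) := by
  unfold Gd
  have h1 : max s 0 = s := max_eq_left hs0
  have h2 : min s (a/2) = s := min_eq_left hs1
  have h3 : min (s - a) a = s - a := min_eq_left (by linarith)
  rw [h1, h2, h3, max_eq_right (by linarith)]
  ring

lemma Gd_eq2 {L a : ℝ} (ha : 0 < a) {s : ℝ} (hs0 : a / 2 ≤ s) (hs1 : s ≤ 2 * a) :
    Gd L a s = 2 * L * (s - a) := by
  unfold Gd
  have h1 : max s 0 = s := max_eq_left (by linarith)
  have h2 : min s (a/2) = a/2 := min_eq_right hs0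
  have h3 : min (s - a) a = s - a := min_eq_left (by linarith)
  rw [h1, h2, h3, max_eq_left (by linarith)]

lemma Gd_eq3 {L a : ℝ} (ha : 0 < a) {s : ℝ} (hs : 2 * a ≤ s) :
    Gd L a s = 2 * L * a := by
  unfold Gd
  have h0 : 0 ≤ min (max s 0) (a/2) := le_min (le_max_right s 0) (by linarith)
  have h3 : min (s - a) a = a := min_eq_right (by linarith)
  have h4 : -(min (max s 0) (a/2)) ≤ a := by linarith
  rw [h3, max_eq_left h4]

lemma Gd_lip {L a : ℝ} (hL : 0 ≤ L) (s t : ℝ) :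
    |Gd L a s - Gd L a t| ≤ 2 * L * |s - t| := by
  unfold Gd
  have key : |max (min (s - a) a) (-(min (max s 0) (a / 2))) -
      max (min (t - a) a) (-(min (max t 0) (a / 2)))| ≤ |s - t| := by
    refine le_trans (abs_max_sub_max_le_max _ _ _ _) (max_le ?_ ?_)
    · refine le_trans (abs_min_sub_min_le_max _ _ _ _) (max_le ?_ ?_)
      · rw [show s - a - (t - a) = s - t by ring]
      · simp [abs_nonneg]
    · rw [neg_sub_neg, abs_sub_comm]
      refine le_trans (abs_min_sub_min_le_max _ _ _ _) (max_le ?_ ?_)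
      · refine le_trans (abs_max_sub_max_le_max _ _ _ _) (max_le ?_ ?_)
        · rw [abs_sub_comm]
        · simp [abs_nonneg]
      · simp [abs_nonneg]
  calc |2 * L * max (min (s - a) a) (-(min (max s 0) (a / 2))) -
      2 * L * max (min (t - a) a) (-(min (max t 0) (a / 2)))|
      = 2 * L * |max (min (s - a) a) (-(min (max s 0) (a / 2))) -
        max (min (t - a) a) (-(min (max t 0) (a / 2)))| := by
        rw [← mul_sub, abs_mul, abs_of_nonneg (by linarith)]
    _ ≤ 2 * L * |s - t| := by nlinarith [abs_nonneg (s - t)]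

lemma Hd_eq0 {L N a : ℝ} {s : ℝ} (hs : s ≤ 0) : Hd L N a s = 0 := if_pos hs

lemma Hd_eq1 {L N a : ℝ} (ha : 0 < a) {s : ℝ} (hs0 : 0 ≤ s) (hs1 : s ≤ a / 2) :
    Hd L N a s = -(L * s ^ 2) := by
  rcases eq_or_lt_of_le hs0 with h | h
  · rw [Hd, if_pos (le_of_eq h.symm), ← h]; ring
  · rw [Hd, if_neg (not_le.2 h), if_pos hs1]

lemma Hd_eq2 {L N a : ℝ} (ha : 0 < a) (hNa : L * a ^ 2 = 2 * N) {s : ℝ}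
    (hs0 : a / 2 ≤ s) (hs1 : s ≤ 2 * a) : Hd L N a s = L * (s - a) ^ 2 - N := by
  rcases eq_or_lt_of_le hs0 with h | h
  · rw [Hd, if_neg (by push_neg; linarith), if_pos (le_of_eq h.symm), ← h]
    nlinarith
  · rw [Hd, if_neg (by push_neg; linarith), if_neg (not_le.2 h), if_pos hs1]

lemma Hd_eq3 {L N a : ℝ} (ha : 0 < a) (hNa : L * a ^ 2 = 2 * N) {s : ℝ}
    (hs : 2 * a ≤ s) : Hd L N a s = 2 * L * a * (s - 2 * a) + N := by
  rcases eq_or_lt_of_le hs with h | h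
  · rw [Hd, if_neg (by push_neg; linarith), if_neg (by push_neg; linarith),
      if_pos (le_of_eq h.symm), ← h]
    nlinarith
  · rw [Hd, if_neg (by push_neg; linarith), if_neg (by push_neg; linarith),
      if_neg (not_le.2 h)]

lemma Hd_bound {L N a : ℝ} (hL : 0 ≤ L) (hN : 0 ≤ N) (ha : 0 < a)
    (hNa : L * a ^ 2 = 2 * N) {s : ℝ} (hs : s ≤ 2 * a) : |Hd L N a s| ≤ N := by
  rcases le_or_gt s 0 with h0 | h0
  · rw [Hd_eq0 h0]; simpa using hN
  rcases le_or_gt s (a/2) with h1 | h1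
  · rw [Hd_eq1 ha h0.le h1, abs_neg, abs_of_nonneg (by positivity)]
    have hs2 : s ^ 2 ≤ (a/2) ^ 2 := by nlinarith
    have := mul_le_mul_of_nonneg_left hs2 hL
    nlinarith
  · rw [Hd_eq2 ha hNa h1.le hs]
    have hsa : (s - a) ^ 2 ≤ a ^ 2 := by nlinarith
    have h2 := mul_le_mul_of_nonneg_left hsa hL
    have h3 : 0 ≤ L * (s - a) ^ 2 := by positivity
    rw [abs_le]
    constructor <;> nlinarith

/-- Junction helper. -/
lemma junction {H : ℝ → ℝ} {d c : ℝ} {s t : Set ℝ}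
    (h1 : HasDerivWithinAt H d s c) (h2 : HasDerivWithinAt H d t c)
    (hst : s ∪ t ∈ 𝓝 c) : HasDerivAt H d c :=
  (h1.union h2).hasDerivAt hst

lemma Hd_deriv {L N a : ℝ} (ha : 0 < a) (hNa : L * a ^ 2 = 2 * N) (s : ℝ) :
    HasDerivAt (Hd L N a) (Gd L a s) s := by
  have d1 : ∀ x : ℝ, HasDerivAt (fun y : ℝ => -(L * y ^ 2)) (-(2 * L * x)) x := by
    intro x
    have := ((hasDerivAt_pow 2 x).const_mul L).neg
    refine this.congr_deriv ?_; push_cast; ring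
  have d2 : ∀ x : ℝ, HasDerivAt (fun y : ℝ => L * (y - a) ^ 2 - N)
      (2 * L * (x - a)) x := by
    intro x
    have := (((((hasDerivAt_id x).sub_const a).pow 2)).const_mul L).sub_const N
    refine this.congr_deriv ?_
    simp only [id_eq]
    push_cast; ring
  have d3 : ∀ x : ℝ, HasDerivAt (fun y : ℝ => 2 * L * a * (y - 2 * a) + N)
      (2 * L * a) x := by
    intro x
    have := ((((hasDerivAt_id x).sub_const (2*a)).const_mul (2*L*a))).add_const N
    refine this.congr_deriv ?_; ring
  rcases lt_or_ge s 0 with h | h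
  · rw [Gd_eq0 ha h.le]
    refine (hasDerivAt_const s (0:ℝ)).congr_of_eventuallyEq ?_
    filter_upwards [Iio_mem_nhds h] with y hy
    exact Hd_eq0 (le_of_lt hy)
  rcases eq_or_lt_of_le h with h0 | h0
  · -- s = 0
    rw [← h0]
    have hG : Gd L a 0 = 0 := by
      rw [Gd_eq1 ha le_rfl (by linarith)]; ring
    rw [hG]
    have hA : HasDerivWithinAt (Hd L N a) 0 (Iic 0) 0 := by
      refine ((hasDerivAt_const (0:ℝ) (0:ℝ)).hasDerivWithinAt).congr ?_ ?_
      · intro y hy; exact Hd_eq0 hy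
      · exact Hd_eq0 le_rfl
    have hB : HasDerivWithinAt (Hd L N a) 0 (Icc 0 (a/2)) 0 := by
      have hd : HasDerivAt (fun y : ℝ => -(L * y ^ 2)) 0 0 := by
        have := d1 0
        rw [show -(2 * L * (0:ℝ)) = 0 by ring] at this
        exact this
      refine hd.hasDerivWithinAt.congr ?_ ?_
      · intro y hy; exact Hd_eq1 ha hy.1 hy.2
      · exact Hd_eq1 ha le_rfl (by linarith)
    refine junction hA hB ?_
    have hsub : Iic (a/2) ⊆ Iic 0 ∪ Icc 0 (a/2) := by
      intro y hy
      rcases le_or_gt y 0 with h | h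
      · exact Or.inl h
      · exact Or.inr ⟨h.le, hy⟩
    exact mem_of_superset (Iic_mem_nhds (by linarith)) hsub
  rcases lt_or_ge s (a/2) with h1 | h1
  · rw [Gd_eq1 ha h0.le h1.le]
    refine (d1 s).congr_of_eventuallyEq ?_
    filter_upwards [Ioo_mem_nhds h0 h1] with y hy
    exact Hd_eq1 ha hy.1.le hy.2.le
  rcases eq_or_lt_of_le h1 with h2 | h2
  · -- s = a/2
    rw [← h2]
    have hG : Gd L a (a/2) = -(2 * L * (a/2)) := Gd_eq1 ha (by linarith) le_rfl
    rw [hG]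
    have hA : HasDerivWithinAt (Hd L N a) (-(2 * L * (a/2))) (Icc 0 (a/2)) (a/2) := by
      refine (d1 (a/2)).hasDerivWithinAt.congr ?_ ?_
      · intro y hy; exact Hd_eq1 ha hy.1 hy.2
      · exact Hd_eq1 ha (by linarith) le_rfl
    have hB : HasDerivWithinAt (Hd L N a) (-(2 * L * (a/2))) (Icc (a/2) (2*a)) (a/2) := by
      have hd := d2 (a/2)
      rw [show 2 * L * (a/2 - a) = -(2 * L * (a/2)) by ring] at hd
      refine hd.hasDerivWithinAt.congr ?_ ?_
      · intro y hy; exact Hd_eq2 ha hNa hy.1 hy.2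
      · exact Hd_eq2 ha hNa le_rfl (by linarith)
    refine junction hA hB ?_
    have hsub : Icc 0 (2*a) ⊆ Icc 0 (a/2) ∪ Icc (a/2) (2*a) := by
      intro y hy
      rcases le_or_gt y (a/2) with h | h
      · exact Or.inl ⟨hy.1, h⟩
      · exact Or.inr ⟨h.le, hy.2⟩
    exact mem_of_superset (Icc_mem_nhds (by linarith) (by linarith)) hsub
  rcases lt_or_ge s (2*a) with h3 | h3
  · rw [Gd_eq2 ha h2.le h3.le]
    refine (d2 s).congr_of_eventuallyEq ?_
    filter_upwards [Ioo_mem_nhds h2 h3] with y hy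
    exact Hd_eq2 ha hNa hy.1.le hy.2.le
  rcases eq_or_lt_of_le h3 with h4 | h4
  · -- s = 2a
    rw [← h4]
    rw [Gd_eq3 ha le_rfl]
    have hA : HasDerivWithinAt (Hd L N a) (2 * L * a) (Icc (a/2) (2*a)) (2*a) := by
      have hd := d2 (2*a)
      rw [show 2 * L * (2*a - a) = 2 * L * a by ring] at hd
      refine hd.hasDerivWithinAt.congr ?_ ?_
      · intro y hy; exact Hd_eq2 ha hNa hy.1 hy.2
      · exact Hd_eq2 ha hNa (by linarith) le_rfl
    have hB : HasDerivWithinAt (Hd L N a) (2 * L * a) (Ici (2*a)) (2*a) := by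
      refine (d3 (2*a)).hasDerivWithinAt.congr ?_ ?_
      · intro y hy; exact Hd_eq3 ha hNa hy
      · exact Hd_eq3 ha hNa le_rfl
    refine junction hA hB ?_
    have hsub : Ici (a/2) ⊆ Icc (a/2) (2*a) ∪ Ici (2*a) := by
      intro y hy
      rcases le_or_gt y (2*a) with h | h
      · exact Or.inl ⟨hy, h⟩
      · exact Or.inr h.le
    exact mem_of_superset (Ici_mem_nhds (by linarith)) hsub
  · rw [Gd_eq3 ha h4.le]
    refine (d3 s).congr_of_eventuallyEq ?_
    filter_upwards [Ioi_mem_nhds h4] with y hy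
    exact Hd_eq3 ha hNa hy.le

theorem stmt4 (D : (ℝ → ℝ) → ℝ → ℝ) (hD : Causal D)
    (L N R τ : ℝ) (hL : 0 ≤ L) (hN : 0 ≤ N) (hR : 0 ≤ R) (hτ : 0 ≤ τ)
    (hexact : ∀ R' : ℝ, 0 ≤ R' → ∃ tR : ℝ, 0 ≤ tR ∧
      ∀ f f' : ℝ → ℝ, IsFLR L R' f f' → ∀ t, tR ≤ t → D f t = f' t) :
    ∃ (f f' η : ℝ → ℝ) (t : ℝ), IsFLR L R f f' ∧ IsEN N η ∧ τ ≤ t ∧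
      2 * Real.sqrt (2 * N * L) ≤ |f' t - D (f + η) t| := by
  rcases eq_or_lt_of_le hL with hL0 | hL0
  · refine ⟨0, 0, 0, τ, ⟨⟨fun t _ => hasDerivWithinAt_const _ _ _,
      fun s _ t _ => by simp [abs_nonneg, mul_nonneg hL (abs_nonneg _)]⟩,
      by simpa using hR, by simpa using hR⟩,
      ⟨measurable_const, fun t _ => by simpa using hN⟩, le_rfl, ?_⟩
    rw [show 2 * N * L = 0 by rw [← hL0]; ring, Real.sqrt_zero]
    simpa using abs_nonneg _
  rcases eq_or_lt_of_le hN with hN0 | hN0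
  · refine ⟨0, 0, 0, τ, ⟨⟨fun t _ => hasDerivWithinAt_const _ _ _,
      fun s _ t _ => by simp [abs_nonneg, mul_nonneg hL (abs_nonneg _)]⟩,
      by simpa using hR, by simpa using hR⟩,
      ⟨measurable_const, fun t _ => by simpa using hN⟩, le_rfl, ?_⟩
    rw [show 2 * N * L = 0 by rw [← hN0]; ring, Real.sqrt_zero]
    simpa using abs_nonneg _
  -- main case : 0 < L, 0 < N
  set a : ℝ := Real.sqrt (2 * N / L) with ha_def
  have ha : 0 < a := Real.sqrt_pos.2 (by positivity)
  have ha2 : a ^ 2 = 2 * N / L := Real.sq_sqrt (by positivity)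
  have hNa : L * a ^ 2 = 2 * N := by rw [ha2]; field_simp
  have hLa : L * a = Real.sqrt (2 * N * L) := by
    rw [show 2 * N * L = (L * a)^2 by nlinarith, Real.sqrt_sq (by positivity)]
  obtain ⟨tR, htR0, htR⟩ := hexact R hR
  set s₀ : ℝ := max τ tR with hs₀_def
  have hs₀0 : 0 ≤ s₀ := le_trans hτ (le_max_left _ _)
  set T : ℝ := s₀ + 2 * a with hT_def
  have hTτ : τ ≤ T := le_trans (le_max_left _ tR) (by linarith)
  have hTtR : tR ≤ T := le_trans (le_max_right τ _) (by linarith)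
  set η : ℝ → ℝ := fun t => if t ≤ T then Hd L N a (t - s₀) else 0 with hη_def
  have Hcont : Continuous (Hd L N a) :=
    continuous_iff_continuousAt.2 fun s => (Hd_deriv ha hNa s).continuousAt
  have hHderiv : ∀ (c : ℝ) (t : ℝ), HasDerivAt (fun t => c * Hd L N a (t - s₀))
      (c * Gd L a (t - s₀)) t := by
    intro c t
    have h1 : HasDerivAt (fun t : ℝ => Hd L N a (t - s₀)) (Gd L a (t - s₀)) t := by
      have := (Hd_deriv ha hNa (t - s₀)).comp t ((hasDerivAt_id t).sub_const s₀)
      exact this.congr_deriv (mul_one _)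
    exact HasDerivAt.const_mul c h1
  have hlip : ∀ (c : ℝ), |c| ≤ 1/2 → ∀ s t : ℝ,
      |c * Gd L a (s - s₀) - c * Gd L a (t - s₀)| ≤ L * |s - t| := by
    intro c hc s t
    rw [← mul_sub, abs_mul]
    calc |c| * |Gd L a (s - s₀) - Gd L a (t - s₀)|
        ≤ (1/2) * (2 * L * |s - s₀ - (t - s₀)|) := by
          apply mul_le_mul hc (Gd_lip hL _ _) (abs_nonneg _) (by norm_num)
      _ = L * |s - t| := by rw [show s - s₀ - (t - s₀) = s - t by ring]; ring
  have hFLR : ∀ c : ℝ, |c| ≤ 1/2 → IsFLR L R (fun t => c * Hd L N a (t - s₀))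
      (fun t => c * Gd L a (t - s₀)) := by
    intro c hc
    refine ⟨⟨fun t _ => (hHderiv c t).hasDerivWithinAt, fun s _ t _ => hlip c hc s t⟩,
      ?_, ?_⟩
    · show |c * Hd L N a (0 - s₀)| ≤ R
      rw [Hd_eq0 (by linarith : (0:ℝ) - s₀ ≤ 0), mul_zero, abs_zero]
      exact hR
    · show |c * Gd L a (0 - s₀)| ≤ R
      rw [Gd_eq0 ha (by linarith : (0:ℝ) - s₀ ≤ 0), mul_zero, abs_zero]
      exact hR
  have hchalf : |(1/2 : ℝ)| ≤ 1/2 := by rw [abs_of_nonneg]; norm_num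
  have hchalfn : |(-(1/2) : ℝ)| ≤ 1/2 := by rw [abs_neg, abs_of_nonneg]; norm_num
  -- noise is admissible
  have hη_EN : IsEN N η := by
    constructor
    · exact Measurable.ite (measurableSet_Iic)
        ((Hcont.comp (continuous_id.sub continuous_const)).measurable)
        measurable_const
    · intro t _
      by_cases ht : t ≤ T
      · rw [hη_def]; simp only [if_pos ht]
        exact Hd_bound hL hN ha hNa (by simp only [hT_def] at ht; linarith)
      · rw [hη_def]; simp only [if_neg ht]
        simpa using hN
  -- the two signals
  refine ⟨fun t => (-(1/2) : ℝ) * Hd L N a (t - s₀),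
    fun t => (-(1/2) : ℝ) * Gd L a (t - s₀), η, T,
    hFLR _ hchalfn, hη_EN, hTτ, ?_⟩
  -- f + η agrees with the alternative signal g on [0, T]
  have hagree : ∀ t ∈ Set.Icc (0:ℝ) T,
      ((fun t => (-(1/2) : ℝ) * Hd L N a (t - s₀)) + η) t
        = (1/2 : ℝ) * Hd L N a (t - s₀) := by
    intro t ht
    simp only [Pi.add_apply, hη_def, if_pos ht.2]
    ring
  have hDu : D ((fun t => (-(1/2) : ℝ) * Hd L N a (t - s₀)) + η) T
      = (1/2 : ℝ) * Gd L a (T - s₀) := by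
    rw [hD _ (fun t => (1/2 : ℝ) * Hd L N a (t - s₀)) T hagree]
    exact htR _ _ (hFLR _ hchalf) T hTtR
  have hGT : Gd L a (T - s₀) = 2 * L * a := by
    rw [show T - s₀ = 2 * a by rw [hT_def]; ring]
    exact Gd_eq3 ha le_rfl
  rw [hDu]
  show 2 * Real.sqrt (2 * N * L) ≤
    |(-(1/2) : ℝ) * Gd L a (T - s₀) - (1/2 : ℝ) * Gd L a (T - s₀)|
  rw [hGT, show (-(1/2) : ℝ) * (2 * L * a) - (1/2 : ℝ) * (2 * L * a)
      = -(2 * (L * a)) by ring, abs_neg, abs_of_nonneg (by positivity), hLa]
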